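/- Let K be a commutative ring with unity, let v, w : ℤ → K, let α, β ∈ ℤ, and let s, r be natural numbers. Then the determinant of the (r+1)×(r+1) matrix with (i,j) entry S^V_{α,β-j}[s+i+j, s+j] (0 ≤ i, j ≤ r) equals ∏_{k=0}^{r} (v(α+s+k)·w(β-k))^k. -/

import Mathlib

open Finset Polynomial

variable {K : Type*} [CommRing K]

/-- Elementary symmetric function `e_t` of the entries of a list. -/
def esymmList : List K → ℕ → K
  | _, 0 => 1
  | [], _ + 1 => 0
  | a :: l, t + 1 => a * esymmList l t + esymmList l (t + 1)

/-- Complete homogeneous symmetric function `h_t` of the entries of a list. -/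
def hsymmList : List K → ℕ → K
  | _, 0 => 1
  | [], _ + 1 => 0
  | a :: l, t + 1 => a * hsymmList (a :: l) t + hsymmList l (t + 1)
  termination_by l t => (l.length, t)

/-- The V-Stirling number of the first kind
`c^V_{α,β}[n,k] = e_{n-k}(v(α+n-1)w(β), …, v(α)w(β+n-1))`,
set to `0` unless `0 ≤ k ≤ n`. -/
def cV (v w : ℤ → K) (α β n k : ℤ) : K :=
  if 0 ≤ k ∧ k ≤ n then
    esymmList (List.ofFn fun j : Fin n.toNat =>
      v (α + n - 1 - (j : ℕ)) * w (β + (j : ℕ))) (n - k).toNat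
  else 0

/-- The V-Stirling number of the second kind
`S^V_{α,β}[n,k] = h_{n-k}(v(α+k)w(β), …, v(α)w(β+k))`,
set to `0` unless `0 ≤ k ≤ n`. -/
def SV (v w : ℤ → K) (α β n k : ℤ) : K :=
  if 0 ≤ k ∧ k ≤ n then
    hsymmList (List.ofFn fun j : Fin (k.toNat + 1) =>
      v (α + k - (j : ℕ)) * w (β + (j : ℕ))) (n - k).toNat
  else 0

lemma hsymmList_zero (l : List K) : hsymmList l 0 = 1 := by
  cases l <;> simp [hsymmList]

lemma hsymmList_cons (a : K) (l : List K) (t : ℕ) :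
    hsymmList (a :: l) (t + 1) = a * hsymmList (a :: l) t + hsymmList l (t + 1) := by
  rw [hsymmList]

lemma gen_det (a : ℕ → K) (L : ℕ → List K) (hL : ∀ n, L (n + 1) = a (n + 1) :: L n) :
    ∀ r m : ℕ, Matrix.det (Matrix.of fun i j : Fin (r + 1) => hsymmList (L (m + (j : ℕ))) (i : ℕ))
      = ∏ j ∈ Finset.range (r + 1), a (m + j) ^ j := by
  intro r
  induction r with
  | zero =>
    intro m
    simp [Matrix.det_fin_one, hsymmList_zero]
  | succ r ih =>
    intro m
    set N : Matrix (Fin (r + 2)) (Fin (r + 2)) K := Matrix.of fun i j =>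
      if (i : ℕ) = 0 then (if (j : ℕ) = 0 then 1 else 0)
      else if (j : ℕ) = 0 then hsymmList (L m) (i : ℕ)
      else a (m + (j : ℕ)) * hsymmList (L (m + (j : ℕ))) ((i : ℕ) - 1) with hN
    have hdet : Matrix.det (Matrix.of fun i j : Fin (r + 2) =>
        hsymmList (L (m + (j : ℕ))) (i : ℕ)) = N.det := by
      apply Matrix.det_eq_of_forall_col_eq_smul_add_pred (fun _ => 1)
      · intro i
        rcases i with ⟨iv, hi⟩
        cases iv with
        | zero => simp [hN, hsymmList_zero]
        | succ iv => simp [hN]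
      · intro i j
        rcases i with ⟨iv, hi⟩
        have hj : (j.succ : ℕ) = (j : ℕ) + 1 := rfl
        have hcast : (j.castSucc : ℕ) = (j : ℕ) := rfl
        have hLj : L (m + ((j : ℕ) + 1)) = a (m + ((j : ℕ) + 1)) :: L (m + (j : ℕ)) := by
          rw [← Nat.add_assoc, hL]
        cases iv with
        | zero =>
          simp [hN, hj, hcast, hsymmList_zero]
        | succ iv =>
          simp only [Matrix.of_apply, hN, hj, hcast, Fin.val_mk, Nat.succ_ne_zero,
            if_false, Nat.add_eq_zero, and_false, Nat.add_sub_cancel, one_mul]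
          rw [hLj, hsymmList_cons, ← hLj]
    rw [hdet, Matrix.det_succ_row_zero]
    rw [Finset.sum_eq_single 0]
    · have h0 : N 0 0 = 1 := by simp [hN]
      rw [h0]
      have hsub : (N.submatrix Fin.succ (Fin.succAbove 0)) =
          Matrix.of (fun i j : Fin (r + 1) =>
            (fun j : Fin (r + 1) => a (m + 1 + (j : ℕ))) j *
            (Matrix.of fun i j : Fin (r + 1) =>
              hsymmList (L ((m + 1) + (j : ℕ))) (i : ℕ)) i j) := by
        ext i j
        simp only [Matrix.submatrix_apply, Fin.succAbove_zero, Matrix.of_apply, hN,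
          Fin.val_succ, Nat.succ_ne_zero, if_false, Nat.add_sub_cancel]
        rw [show m + ((j : ℕ) + 1) = m + 1 + (j : ℕ) by omega]
      rw [hsub, Matrix.det_mul_row, ih (m + 1)]
      simp only [Fin.val_zero, pow_zero, one_mul]
      rw [Fin.prod_univ_eq_prod_range (fun k => a (m + 1 + k)) (r + 1)]
      rw [Finset.prod_range_succ' (fun j => a (m + j) ^ j) (r + 1)]
      simp only [pow_zero, mul_one, Nat.add_zero]
      rw [← Finset.prod_mul_distrib]
      apply Finset.prod_congr rfl
      intro j hj
      rw [show m + (j + 1) = m + 1 + j by omega]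
      ring
    · intro j _ hj
      have hj' : (j : ℕ) ≠ 0 := fun h => hj (Fin.ext h)
      have : N 0 j = 0 := by simp [hN, hj', hj]
      rw [this]; ring
    · intro h; exact absurd (Finset.mem_univ 0) h

theorem SV_det (v w : ℤ → K) (α β : ℤ) (s r : ℕ) :
    Matrix.det (Matrix.of fun i j : Fin (r + 1) =>
        SV v w α (β - (j : ℕ)) ((s : ℕ) + (i : ℕ) + (j : ℕ)) ((s : ℕ) + (j : ℕ))) =
      ∏ k ∈ Finset.range (r + 1), (v (α + (s : ℕ) + (k : ℕ)) * w (β - (k : ℕ))) ^ k := by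
  set a : ℕ → K := fun k => v (α + (s : ℕ) + (k : ℕ)) * w (β - (k : ℕ)) with ha
  set L : ℕ → List K := fun j => List.ofFn fun t : Fin (s + j + 1) =>
    v (α + ((s : ℤ) + (j : ℕ)) - (t : ℕ)) * w ((β - (j : ℕ)) + (t : ℕ)) with hLdef
  have hL : ∀ n, L (n + 1) = a (n + 1) :: L n := by
    intro n
    simp only [hLdef]
    rw [show s + (n + 1) + 1 = (s + n + 1) + 1 by omega]
    rw [List.ofFn_succ]
    congr 1
    · simp only [Fin.val_zero, Nat.cast_zero, ha]
      push_cast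
      ring_nf
    · apply congrArg
      funext t
      simp only [Fin.val_succ]
      push_cast
      ring_nf
  have hentry : ∀ (i j : Fin (r + 1)),
      SV v w α (β - (j : ℕ)) ((s : ℕ) + (i : ℕ) + (j : ℕ)) ((s : ℕ) + (j : ℕ)) =
      hsymmList (L (0 + (j : ℕ))) (i : ℕ) := by
    intro i j
    rw [SV, if_pos]
    · have hdeg : (((s : ℕ) : ℤ) + ((i : ℕ) : ℤ) + ((j : ℕ) : ℤ) -
          (((s : ℕ) : ℤ) + ((j : ℕ) : ℤ))).toNat = (i : ℕ) := by omega
      rw [hdeg]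
      congr 1
      apply List.ext_getElem
      · simp only [List.length_ofFn, hLdef, Nat.zero_add]
        omega
      · intro t h1 h2
        simp only [List.getElem_ofFn, hLdef, Nat.zero_add]
    · constructor <;> omega
  calc Matrix.det (Matrix.of fun i j : Fin (r + 1) =>
        SV v w α (β - (j : ℕ)) ((s : ℕ) + (i : ℕ) + (j : ℕ)) ((s : ℕ) + (j : ℕ)))
      = Matrix.det (Matrix.of fun i j : Fin (r + 1) => hsymmList (L (0 + (j : ℕ))) (i : ℕ)) := by
        congr 1; ext i j; exact hentry i j
    _ = ∏ j ∈ Finset.range (r + 1), a (0 + j) ^ j := gen_det a L hL r 0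
    _ = ∏ k ∈ Finset.range (r + 1), (v (α + (s : ℕ) + (k : ℕ)) * w (β - (k : ℕ))) ^ k := by
        simp [ha]
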